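/- If g(p) = -(p + N - M/2)² + M²/4 - MN (with M, N > 0) has no root in (0,1], then g(p) < 0 for all p ∈ (0,1], f(p) = -ln p - M/(N+p) - K is strictly decreasing on (0,1], and hence f has exactly one root in (0,1). -/

import Mathlib

open Real Set

theorem stmt2 (M N K : ℝ) (hM : 0 < M) (hN : 0 < N) (hK : 0 < K)
    (f g : ℝ → ℝ)
    (hf : ∀ p, f p = -Real.log p - M / (N + p) - K)
    (hg : ∀ p, g p = -(p + N - M / 2) ^ 2 + M ^ 2 / 4 - M * N)
    (hnoroot : ∀ p ∈ Ioc (0:ℝ) 1, g p ≠ 0) :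
    (∀ p ∈ Ioc (0:ℝ) 1, g p < 0) ∧
    StrictAntiOn f (Ioc (0:ℝ) 1) ∧
    (∃! p : ℝ, p ∈ Ioo (0:ℝ) 1 ∧ f p = 0) := by
  have hgeq : g = fun p => -(p + N - M / 2) ^ 2 + M ^ 2 / 4 - M * N := funext hg
  have hgcont : Continuous g := by rw [hgeq]; continuity
  -- Part 1: g < 0 on Ioc 0 1
  have hgneg : ∀ p ∈ Ioc (0:ℝ) 1, g p < 0 := by
    intro p hp
    rcases lt_or_gt_of_ne (hnoroot p hp) with h | h
    · exact h
    exfalso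
    obtain ⟨hp0, hp1⟩ := hp
    set q := min (p / 2) (N ^ 2 / (2 * M)) with hq
    have hq0 : 0 < q := lt_min (by linarith) (by positivity)
    have hqp : q < p := lt_of_le_of_lt (min_le_left _ _) (by linarith)
    have hgq : g q < 0 := by
      have h1 : q ≤ N ^ 2 / (2 * M) := min_le_right _ _
      have h2 : M * q ≤ N ^ 2 / 2 := by
        have he : M * (N ^ 2 / (2 * M)) = N ^ 2 / 2 := by field_simp
        nlinarith
      rw [hg]; nlinarith
    have : (0:ℝ) ∈ g '' Ioo q p := by
      apply intermediate_value_Ioo hqp.le hgcont.continuousOn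
      exact ⟨hgq, h⟩
    obtain ⟨c, hc, hc0⟩ := this
    exact hnoroot c ⟨lt_trans hq0 hc.1, le_of_lt (lt_of_lt_of_le hc.2 hp1)⟩ hc0
  -- derivative of f
  have hderiv : ∀ p : ℝ, 0 < p → HasDerivAt f (-(1/p) + M / (N + p) ^ 2) p := by
    intro p hp
    have hNp : N + p ≠ 0 := by positivity
    have h1 : HasDerivAt (fun x : ℝ => -Real.log x) (-(1/p)) p := by
      rw [one_div]; exact (Real.hasDerivAt_log (ne_of_gt hp)).neg
    have h2 : HasDerivAt (fun x : ℝ => N + x) 1 p := (hasDerivAt_id p).const_add N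
    have h3 : HasDerivAt (fun x : ℝ => M / (N + x)) (-(M / (N + p) ^ 2)) p := by
      have := (h2.inv hNp).const_mul M
      simp only [div_eq_mul_inv]
      refine this.congr_deriv ?_
      ring
    have : HasDerivAt (fun x => -Real.log x - M / (N + x) - K)
        (-(1/p) - (-(M / (N + p) ^ 2))) p := (h1.sub h3).sub_const K
    have hfeq : f = fun x => -Real.log x - M / (N + x) - K := funext hf
    rw [hfeq]
    convert this using 1; ring
  have hfcont : ContinuousOn f (Ioc (0:ℝ) 1) := by
    intro x hx
    exact ((hderiv x hx.1).continuousAt).continuousWithinAt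
  -- Part 2: strict anti
  have hanti : StrictAntiOn f (Ioc (0:ℝ) 1) := by
    apply strictAntiOn_of_deriv_neg (convex_Ioc 0 1) hfcont
    intro x hx
    rw [interior_Ioc] at hx
    have hx0 : 0 < x := hx.1
    rw [(hderiv x hx0).deriv]
    have hgx : g x < 0 := hgneg x ⟨hx0, hx.2.le⟩
    rw [hg] at hgx
    have hNx : (0:ℝ) < N + x := by linarith
    have key : M * x < (N + x) ^ 2 := by nlinarith
    have h1 : M / (N + x) ^ 2 < 1 / x := by
      rw [div_lt_div_iff₀ (by positivity) hx0]
      nlinarith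
    linarith
  refine ⟨hgneg, hanti, ?_⟩
  -- Part 3: unique root
  set p₀ := Real.exp (-(M / N + K + 1)) with hp₀def
  have hp₀pos : 0 < p₀ := Real.exp_pos _
  have hp₀lt1 : p₀ < 1 := by
    rw [hp₀def, Real.exp_lt_one_iff]
    have : 0 < M / N := by positivity
    linarith
  have hfp₀ : 0 < f p₀ := by
    rw [hf, hp₀def, Real.log_exp]
    have h1 : M / (N + Real.exp (-(M / N + K + 1))) ≤ M / N := by
      apply div_le_div_of_nonneg_left hM.le hN
      linarith [Real.exp_pos (-(M / N + K + 1))]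
    linarith
  have hf1 : f 1 < 0 := by
    rw [hf]
    simp only [Real.log_one]
    have : 0 < M / (N + 1) := by positivity
    linarith
  have hcont' : ContinuousOn f (Icc p₀ 1) := hfcont.mono (fun x hx => ⟨lt_of_lt_of_le hp₀pos hx.1, hx.2⟩)
  have : (0:ℝ) ∈ f '' Ioo p₀ 1 := by
    apply intermediate_value_Ioo' hp₀lt1.le hcont'
    exact ⟨hf1, hfp₀⟩
  obtain ⟨c, hc, hc0⟩ := this
  have hcmem : c ∈ Ioo (0:ℝ) 1 := ⟨lt_trans hp₀pos hc.1, hc.2⟩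
  refine ⟨c, ⟨hcmem, hc0⟩, ?_⟩
  rintro y ⟨hy, hy0⟩
  exact hanti.injOn ⟨hy.1, hy.2.le⟩ ⟨hcmem.1, hcmem.2.le⟩ (by rw [hy0, hc0])
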